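/- Let W : GL⁺(2) → ℝ be objective, isotropic and isochoric, and let h : (0,∞) → ℝ be defined by h(t) = W(diag(t,1)). Then the following are equivalent: (i) W is polyconvex; (ii) W is rank-one convex; (iii) h is convex on (0,∞); (iv) h is convex and non-decreasing on [1,∞). -/

import Mathlib

open Matrix Set

noncomputable section

/-- The space of real 2×2 matrices. -/
abbrev Mat2 : Type := Matrix (Fin 2) (Fin 2) ℝ

/-- The special orthogonal group SO(2): orthogonal 2×2 matrices with determinant 1. -/
def SO2 : Set Mat2 := {Q : Mat2 | Qᵀ * Q = 1 ∧ Q.det = 1}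

/-- A function `W` (viewed on GL⁺(2) = {F | 0 < det F}) is polyconvex if there is a
convex function `P : ℝ^{2×2} × ℝ → ℝ ∪ {+∞}` with `W F = P (F, det F)` on GL⁺(2). -/
def Polyconvex (W : Mat2 → ℝ) : Prop :=
  ∃ P : Mat2 × ℝ → EReal,
    (∀ x y : Mat2 × ℝ, ∀ a b : ℝ, 0 ≤ a → 0 ≤ b → a + b = 1 →
      P (a • x + b • y) ≤ (a : EReal) * P x + (b : EReal) * P y) ∧
    (∀ F : Mat2, 0 < F.det → (W F : EReal) = P (F, F.det))

/-- Rank-one convexity of `W` on GL⁺(2): convexity along rank-one line segments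
lying in GL⁺(2). -/
def RankOneConvex (W : Mat2 → ℝ) : Prop :=
  ∀ F : Mat2, 0 < F.det → ∀ ξ η : Fin 2 → ℝ, ∀ θ : ℝ, θ ∈ Set.Icc (0:ℝ) 1 →
    (∀ t ∈ Set.Icc (0:ℝ) 1, 0 < (F + t • vecMulVec ξ η).det) →
    W (F + (1 - θ) • vecMulVec ξ η) ≤ θ * W F + (1 - θ) * W (F + vecMulVec ξ η)

/-- Objectivity and isotropy: bi-SO(2)-invariance on GL⁺(2). -/
def ObjectiveIsotropic (W : Mat2 → ℝ) : Prop :=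
  ∀ F : Mat2, 0 < F.det → ∀ Q₁ Q₂ : Mat2, Q₁ ∈ SO2 → Q₂ ∈ SO2 →
    W (Q₁ * F * Q₂) = W F

/-- Isochoric: invariance under positive scaling on GL⁺(2). -/
def Isochoric (W : Mat2 → ℝ) : Prop :=
  ∀ F : Mat2, 0 < F.det → ∀ a : ℝ, 0 < a → W (a • F) = W F

/-- The 2×2 diagonal matrix diag(a, b). -/
def diag2 (a b : ℝ) : Mat2 := !![a, 0; 0, b]

/-- The squared Frobenius norm of a 2×2 matrix. -/
def frobSq (F : Mat2) : ℝ := ∑ i, ∑ j, (F i j) ^ 2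

/-- The operator norm of `F` induced by the Euclidean norm on ℝ²:
the supremum of ‖F·x‖ over Euclidean-unit vectors x. -/
def opNorm2 (F : Mat2) : ℝ :=
  sSup {r : ℝ | ∃ x : Fin 2 → ℝ, (x 0) ^ 2 + (x 1) ^ 2 = 1 ∧
    r = Real.sqrt ((F.mulVec x 0) ^ 2 + (F.mulVec x 1) ^ 2)}

section Aux

/-- matrix of multiplication by complex z -/
def Cmat (z : ℂ) : Mat2 := !![z.re, -z.im; z.im, z.re]
/-- matrix of u ↦ w * conj u -/
def Amat (w : ℂ) : Mat2 := !![w.re, w.im; w.im, -w.re]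

def zc (F : Mat2) : ℂ := ⟨(F 0 0 + F 1 1)/2, (F 1 0 - F 0 1)/2⟩
def wc (F : Mat2) : ℂ := ⟨(F 0 0 - F 1 1)/2, (F 0 1 + F 1 0)/2⟩

lemma decompF (F : Mat2) : F = Cmat (zc F) + Amat (wc F) := by
  ext i j
  fin_cases i <;> fin_cases j <;>
    simp [Cmat, Amat, zc, wc] <;> ring

lemma Cmat_mul (u z : ℂ) : Cmat u * Cmat z = Cmat (u * z) := by
  ext i j
  fin_cases i <;> fin_cases j <;>
    simp [Cmat, Matrix.mul_apply, Fin.sum_univ_two, Complex.mul_re, Complex.mul_im] <;> ring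

lemma Cmat_mul_Amat (u w : ℂ) : Cmat u * Amat w = Amat (u * w) := by
  ext i j
  fin_cases i <;> fin_cases j <;>
    simp [Cmat, Amat, Matrix.mul_apply, Fin.sum_univ_two, Complex.mul_re, Complex.mul_im] <;> ring

lemma Amat_mul_Cmat (w v : ℂ) : Amat w * Cmat v = Amat (w * (starRingEnd ℂ) v) := by
  ext i j
  fin_cases i <;> fin_cases j <;>
    simp [Cmat, Amat, Matrix.mul_apply, Fin.sum_univ_two, Complex.mul_re, Complex.mul_im] <;> ring

lemma Cmat_mem_SO2 {u : ℂ} (hu : ‖u‖ = 1) : Cmat u ∈ SO2 := by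
  have h : u.re^2 + u.im^2 = 1 := by
    have h1 := Complex.sq_norm u
    rw [hu, Complex.normSq_apply] at h1
    nlinarith [h1]
  constructor
  · ext i j
    fin_cases i <;> fin_cases j <;>
      simp [Cmat, Matrix.mul_apply, Matrix.transpose, Fin.sum_univ_two, Matrix.one_apply] <;> nlinarith
  · simp [Cmat, Matrix.det_fin_two_of]; nlinarith

lemma det_eq_abs (F : Mat2) :
    F.det = (‖zc F‖)^2 - (‖wc F‖)^2 := by
  rw [Matrix.det_fin_two, Complex.sq_norm, Complex.sq_norm,
    Complex.normSq_apply, Complex.normSq_apply]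
  simp only [zc, wc]
  ring

lemma rot_to_abs (z : ℂ) :
    z * Complex.exp ((-z.arg : ℝ) * Complex.I) = (‖z‖ : ℂ) := by
  have h0 : (z.arg : ℂ) * Complex.I + ((-z.arg : ℝ) : ℂ) * Complex.I = 0 := by
    push_cast; ring
  have h : ((‖z‖ : ℝ) : ℂ) * Complex.exp (z.arg * Complex.I) *
      Complex.exp ((-z.arg : ℝ) * Complex.I) = (‖z‖ : ℂ) := by
    rw [mul_assoc, ← Complex.exp_add, h0, Complex.exp_zero, mul_one]
  rw [← h, Complex.norm_mul_exp_arg_mul_I]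

lemma svd2 (F : Mat2) :
    ∃ Q₁ ∈ SO2, ∃ Q₂ ∈ SO2, Q₁ * F * Q₂ =
      diag2 (‖zc F‖ + ‖wc F‖)
            (‖zc F‖ - ‖wc F‖) := by
  set z := zc F with hz
  set w := wc F with hw
  set φ := z.arg
  set ψ := w.arg
  set u : ℂ := Complex.exp (((-((φ+ψ)/2) : ℝ) : ℂ) * Complex.I) with hu_def
  set v : ℂ := Complex.exp ((((ψ-φ)/2 : ℝ) : ℂ) * Complex.I) with hv_def
  have hu : ‖u‖ = 1 := Complex.norm_exp_ofReal_mul_I _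
  have hv : ‖v‖ = 1 := Complex.norm_exp_ofReal_mul_I _
  have huv : u * v = Complex.exp (((-φ : ℝ) : ℂ) * Complex.I) := by
    rw [hu_def, hv_def, ← Complex.exp_add]; congr 1; push_cast; ring
  have hconj : (starRingEnd ℂ) v = Complex.exp (((-((ψ-φ)/2) : ℝ) : ℂ) * Complex.I) := by
    rw [hv_def, ← Complex.exp_conj]
    congr 1
    rw [(starRingEnd ℂ).map_mul, Complex.conj_ofReal, Complex.conj_I]
    push_cast; ring
  have huv' : u * (starRingEnd ℂ) v = Complex.exp (((-ψ : ℝ) : ℂ) * Complex.I) := by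
    rw [hu_def, hconj, ← Complex.exp_add]; congr 1; push_cast; ring
  have hz1 : u * z * v = ((‖z‖ : ℝ) : ℂ) := by
    have : u * z * v = z * (u * v) := by ring
    rw [this, huv]; exact rot_to_abs z
  have hw1 : u * w * (starRingEnd ℂ) v = ((‖w‖ : ℝ) : ℂ) := by
    have : u * w * (starRingEnd ℂ) v = w * (u * (starRingEnd ℂ) v) := by ring
    rw [this, huv']; exact rot_to_abs w
  refine ⟨Cmat u, Cmat_mem_SO2 hu, Cmat v, Cmat_mem_SO2 hv, ?_⟩
  have hF : F = Cmat z + Amat w := decompF F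
  rw [hF, Matrix.mul_add, Matrix.add_mul, Cmat_mul, Cmat_mul_Amat, Amat_mul_Cmat,
    Cmat_mul, hz1, hw1]
  ext i j
  fin_cases i <;> fin_cases j <;> simp [Cmat, Amat, diag2, sub_eq_add_neg]


def Nn (F : Mat2) : ℝ := ‖zc F‖ + ‖wc F‖

lemma det_diag2 (a b : ℝ) : (diag2 a b).det = a * b := by
  simp [diag2, Matrix.det_fin_two_of]

lemma rep (W : Mat2 → ℝ) (hOI : ObjectiveIsotropic W) (hIso : Isochoric W)
    (F : Mat2) (hF : 0 < F.det) :
    W F = W (diag2 (Nn F ^ 2 / F.det) 1) ∧ 1 ≤ Nn F ^ 2 / F.det := by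
  obtain ⟨Q₁, hQ₁, Q₂, hQ₂, hsvd⟩ := svd2 F
  set A := ‖zc F‖ with hA
  set B := ‖wc F‖ with hB
  have hdet : F.det = A ^ 2 - B ^ 2 := det_eq_abs F
  have hBnn : 0 ≤ B := norm_nonneg _
  have hAB : B < A := by nlinarith [norm_nonneg (zc F)]
  have hs2 : 0 < A - B := by linarith
  have hs1 : 0 < A + B := by linarith
  set t : ℝ := (A + B) / (A - B) with ht_def
  have ht1 : 1 ≤ t := (one_le_div hs2).2 (by linarith)
  have ht0 : 0 < t := lt_of_lt_of_le one_pos ht1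
  have htdet : (diag2 t 1).det = t := by rw [det_diag2]; ring
  have hsc : (A - B) • diag2 t 1 = diag2 (A + B) (A - B) := by
    ext i j
    fin_cases i <;> fin_cases j <;>
      simp only [diag2, Matrix.smul_apply, Matrix.cons_val', Matrix.cons_val_zero,
        Matrix.cons_val_one, Matrix.head_cons, Matrix.head_fin_const, Matrix.empty_val',
        Matrix.cons_val_fin_one, smul_eq_mul, ht_def, Matrix.of_apply, Fin.zero_eta, Fin.mk_one, mul_zero] <;> field_simp
  have h1 : W F = W (diag2 (A + B) (A - B)) := by
    rw [← hsvd]; exact (hOI F hF Q₁ Q₂ hQ₁ hQ₂).symm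
  have h2 : W (diag2 (A + B) (A - B)) = W (diag2 t 1) := by
    rw [← hsc]
    have := hIso (diag2 t 1) (by rw [htdet]; exact ht0) (A - B) hs2
    exact this
  have hteq : t = Nn F ^ 2 / F.det := by
    rw [ht_def, hdet, Nn, ← hA, ← hB]
    rw [show A ^ 2 - B ^ 2 = (A + B) * (A - B) by ring]
    rw [div_eq_div_iff (ne_of_gt hs2) (by positivity)]
    ring
  exact ⟨by rw [h1, h2, hteq], hteq ▸ ht1⟩

lemma h_symm (W : Mat2 → ℝ) (hOI : ObjectiveIsotropic W) (hIso : Isochoric W)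
    {t : ℝ} (ht : 0 < t) : W (diag2 t 1) = W (diag2 (1/t) 1) := by
  have hQ : (!![0,-1;1,0] : Mat2) ∈ SO2 := by
    constructor
    · ext i j
      fin_cases i <;> fin_cases j <;>
        simp [Matrix.mul_apply, Matrix.transpose, Fin.sum_univ_two, Matrix.one_apply]
    · simp [Matrix.det_fin_two_of]
  have hQ' : (!![0,1;-1,0] : Mat2) ∈ SO2 := by
    constructor
    · ext i j
      fin_cases i <;> fin_cases j <;>
        simp [Matrix.mul_apply, Matrix.transpose, Fin.sum_univ_two, Matrix.one_apply]
    · simp [Matrix.det_fin_two_of]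
  have hinv : 0 < 1/t := by positivity
  have hdet1 : 0 < (diag2 (1/t) 1).det := by rw [det_diag2]; simpa using hinv
  have h1 : (!![0,-1;1,0] : Mat2) * diag2 (1/t) 1 * !![0,1;-1,0] = diag2 1 (1/t) := by
    ext i j
    fin_cases i <;> fin_cases j <;>
      simp [diag2, Matrix.mul_apply, Fin.sum_univ_two]
  have h2 : W (diag2 1 (1/t)) = W (diag2 (1/t) 1) := by
    rw [← h1]; exact hOI _ hdet1 _ _ hQ hQ'
  have hdet2 : 0 < (diag2 1 (1/t)).det := by rw [det_diag2]; simpa using hinv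
  have h3 : W (t • diag2 1 (1/t)) = W (diag2 1 (1/t)) := hIso _ hdet2 t ht
  have h4 : t • diag2 1 (1/t) = diag2 t 1 := by
    ext i j
    fin_cases i <;> fin_cases j <;>
      simp [diag2, Matrix.smul_apply] <;> field_simp
  rw [← h4, h3, h2]


lemma poly_imp_rank (W : Mat2 → ℝ) (hP : Polyconvex W) : RankOneConvex W := by
  obtain ⟨P, hPc, hPe⟩ := hP
  intro F hF ξ η θ hθ hdets
  set R := vecMulVec ξ η with hR
  have hRlin : ∀ s : ℝ, (F + s • R).det =
      (1 - s) * F.det + s * (F + R).det := by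
    intro s
    simp only [hR, Matrix.det_fin_two, Matrix.add_apply, Matrix.smul_apply,
      Matrix.vecMulVec_apply, smul_eq_mul]
    ring
  have h1 : 0 < (F + R).det := by
    have := hdets 1 ⟨zero_le_one, le_refl 1⟩
    simpa using this
  have hm : 0 < (F + (1 - θ) • R).det :=
    hdets (1 - θ) ⟨by linarith [hθ.2], by linarith [hθ.1]⟩
  have hpt : θ • ((F, F.det) : Mat2 × ℝ) + (1 - θ) • ((F + R, (F + R).det) : Mat2 × ℝ)
      = (F + (1 - θ) • R, (F + (1 - θ) • R).det) := by
    refine Prod.ext ?_ ?_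
    · show θ • F + (1 - θ) • (F + R) = F + (1 - θ) • R
      ext i j
      simp only [Matrix.add_apply, Matrix.smul_apply, smul_eq_mul]
      ring
    · show θ • F.det + (1 - θ) • (F + R).det = (F + (1 - θ) • R).det
      rw [hRlin (1 - θ)]
      simp only [smul_eq_mul]
      ring
  have hc := hPc (F, F.det) (F + R, (F + R).det) θ (1 - θ) hθ.1 (by linarith [hθ.2]) (by ring)
  rw [hpt] at hc
  rw [← hPe F hF, ← hPe (F + R) h1, ← hPe (F + (1 - θ) • R) hm] at hc
  rw [← EReal.coe_mul, ← EReal.coe_mul, ← EReal.coe_add, EReal.coe_le_coe_iff] at hc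
  exact hc

lemma rank_imp_cvx (W : Mat2 → ℝ) (hRC : RankOneConvex W) :
    ConvexOn ℝ (Set.Ioi (0:ℝ)) (fun t => W (diag2 t 1)) := by
  refine ⟨convex_Ioi 0, ?_⟩
  intro x hx y hy a b ha hb hab
  simp only [smul_eq_mul]
  have hx0 : (0:ℝ) < x := hx
  have hy0 : (0:ℝ) < y := hy
  have hline : ∀ s : ℝ, diag2 x 1 + s • vecMulVec ![y - x, 0] ![1, 0]
      = diag2 (x + s * (y - x)) 1 := by
    intro s
    ext i j
    fin_cases i <;> fin_cases j <;>
      simp [diag2, Matrix.vecMulVec_apply, Matrix.smul_apply, Matrix.add_apply]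
  have hdets : ∀ s ∈ Set.Icc (0:ℝ) 1,
      0 < (diag2 x 1 + s • vecMulVec ![y - x, 0] ![1, 0]).det := by
    intro s hs
    rw [hline s, det_diag2, mul_one]
    rcases lt_or_ge s 1 with h | h
    · nlinarith [hs.1]
    · have : s = 1 := le_antisymm hs.2 h
      rw [this]; linarith
  have key := hRC (diag2 x 1) (by rw [det_diag2]; simpa using hx0)
    ![y - x, 0] ![1, 0] a ⟨ha, by linarith⟩ hdets
  have hline1 : diag2 x 1 + vecMulVec ![y - x, 0] ![1, 0] = diag2 y 1 := by
    have := hline 1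
    rw [one_smul] at this
    rw [this]
    norm_num
  rw [hline, hline1] at key
  have e1 : x + (1 - a) * (y - x) = a * x + b * y := by
    have : b = 1 - a := by linarith
    rw [this]; ring
  rw [e1] at key
  have hb1 : b = 1 - a := by linarith
  rw [hb1] at key ⊢
  exact key

lemma cvx_imp_ici (W : Mat2 → ℝ) (hOI : ObjectiveIsotropic W) (hIso : Isochoric W)
    (hcvx : ConvexOn ℝ (Set.Ioi (0:ℝ)) (fun t => W (diag2 t 1))) :
    ConvexOn ℝ (Set.Ici (1:ℝ)) (fun t => W (diag2 t 1)) ∧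
      MonotoneOn (fun t => W (diag2 t 1)) (Set.Ici (1:ℝ)) := by
  set h : ℝ → ℝ := fun t => W (diag2 t 1) with hh
  have hsub : Set.Ici (1:ℝ) ⊆ Set.Ioi 0 := fun x hx => Set.mem_Ioi.2 (lt_of_lt_of_le one_pos hx)
  have hmin : ∀ t : ℝ, 1 ≤ t → h 1 ≤ h t := by
    intro t ht
    have ht0 : (0:ℝ) < t := lt_of_lt_of_le one_pos ht
    have ht1 : (0:ℝ) < t + 1 := by linarith
    set lam : ℝ := t / (t + 1) with hlam
    have hl0 : 0 ≤ lam := by positivity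
    have hl1 : 0 ≤ 1 - lam := by
      rw [hlam, sub_nonneg, div_le_one ht1]; linarith
    have hcomb : lam * (1/t) + (1 - lam) * t = 1 := by
      rw [hlam]; field_simp; ring
    have hmem1 : (1/t : ℝ) ∈ Set.Ioi (0:ℝ) := by simp; positivity
    have hmem2 : t ∈ Set.Ioi (0:ℝ) := ht0
    have := hcvx.2 hmem1 hmem2 hl0 hl1 (by ring)
    simp only [smul_eq_mul] at this
    rw [hcomb] at this
    have hsym : h (1/t) = h t := (h_symm W hOI hIso ht0).symm
    rw [hsym] at this
    calc h 1 ≤ lam * h t + (1 - lam) * h t := this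
      _ = h t := by ring
  constructor
  · exact hcvx.subset hsub (convex_Ici 1)
  · intro s hs t ht hst
    rcases eq_or_lt_of_le (Set.mem_Ici.1 ht : (1:ℝ) ≤ t) with h1t | h1t
    · have hs1 : s = 1 := le_antisymm (h1t ▸ hst) hs
      rw [hs1, ← h1t]
    · set θ : ℝ := (t - s) / (t - 1) with hθ
      have htm1 : (0:ℝ) < t - 1 := by linarith
      have hθ0 : 0 ≤ θ := div_nonneg (by linarith) (le_of_lt htm1)
      have hs' : (1:ℝ) ≤ s := hs
      have hθ1 : θ ≤ 1 := by
        rw [hθ, div_le_one htm1]; linarith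
      have hcomb : θ * 1 + (1 - θ) * t = s := by
        rw [hθ]
        field_simp
        ring
      have hkey := hcvx.2 (Set.mem_Ioi.2 one_pos) (Set.mem_Ioi.2 (lt_of_lt_of_le one_pos (Set.mem_Ici.1 ht)))
        hθ0 (show (0:ℝ) ≤ 1 - θ by linarith) (show θ + (1 - θ) = 1 by ring)
      simp only [smul_eq_mul] at hkey
      rw [hcomb] at hkey
      have hm1 := hmin t ht
      have : θ * h 1 ≤ θ * h t := mul_le_mul_of_nonneg_left hm1 hθ0
      calc h s ≤ θ * h 1 + (1 - θ) * h t := hkey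
        _ ≤ θ * h t + (1 - θ) * h t := by linarith
        _ = h t := by ring

lemma Nn_nonneg (F : Mat2) : 0 ≤ Nn F :=
  add_nonneg (norm_nonneg _) (norm_nonneg _)

lemma zc_comb (F G : Mat2) (a b : ℝ) :
    zc (a • F + b • G) = (a : ℂ) * zc F + (b : ℂ) * zc G := by
  apply Complex.ext <;>
    simp [zc, Matrix.add_apply, Matrix.smul_apply, Complex.mul_re, Complex.mul_im,
      Complex.add_re, Complex.add_im] <;> ring

lemma wc_comb (F G : Mat2) (a b : ℝ) :
    wc (a • F + b • G) = (a : ℂ) * wc F + (b : ℂ) * wc G := by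
  apply Complex.ext <;>
    simp [wc, Matrix.add_apply, Matrix.smul_apply, Complex.mul_re, Complex.mul_im,
      Complex.add_re, Complex.add_im] <;> ring

lemma Nn_comb (F G : Mat2) (a b : ℝ) (ha : 0 ≤ a) (hb : 0 ≤ b) :
    Nn (a • F + b • G) ≤ a * Nn F + b * Nn G := by
  have h1 : ‖zc (a • F + b • G)‖ ≤ a * ‖zc F‖ + b * ‖zc G‖ := by
    rw [zc_comb]
    calc ‖(a : ℂ) * zc F + (b : ℂ) * zc G‖
        ≤ ‖(a : ℂ) * zc F‖ + ‖(b : ℂ) * zc G‖ := norm_add_le _ _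
      _ = a * ‖zc F‖ + b * ‖zc G‖ := by
          rw [norm_mul, norm_mul, Complex.norm_real, Complex.norm_real,
            Real.norm_of_nonneg ha, Real.norm_of_nonneg hb]
  have h2 : ‖wc (a • F + b • G)‖ ≤ a * ‖wc F‖ + b * ‖wc G‖ := by
    rw [wc_comb]
    calc ‖(a : ℂ) * wc F + (b : ℂ) * wc G‖
        ≤ ‖(a : ℂ) * wc F‖ + ‖(b : ℂ) * wc G‖ := norm_add_le _ _
      _ = a * ‖wc F‖ + b * ‖wc G‖ := by
          rw [norm_mul, norm_mul, Complex.norm_real, Complex.norm_real,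
            Real.norm_of_nonneg ha, Real.norm_of_nonneg hb]
  simp only [Nn]
  linarith

lemma aux_mul_ne_bot (c : ℝ) (hc : 0 < c) (e : EReal) (he : e ≠ ⊥) : (c : EReal) * e ≠ ⊥ := by
  induction e using EReal.rec with
  | bot => exact absurd rfl he
  | coe r => rw [← EReal.coe_mul]; exact EReal.coe_ne_bot _
  | top => rw [EReal.coe_mul_top_of_pos hc]; simp

lemma ici_imp_poly (W : Mat2 → ℝ) (hOI : ObjectiveIsotropic W) (hIso : Isochoric W)
    (hc : ConvexOn ℝ (Set.Ici (1:ℝ)) (fun t => W (diag2 t 1)))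
    (hmono : MonotoneOn (fun t => W (diag2 t 1)) (Set.Ici (1:ℝ))) :
    Polyconvex W := by
  set h : ℝ → ℝ := fun t => W (diag2 t 1) with hh
  set g : ℝ → ℝ := fun s => h (max s 1) with hg
  have g_mono : Monotone g := by
    intro s t hst
    exact hmono (le_max_right s 1) (le_max_right t 1) (max_le_max hst (le_refl 1))
  have g_cvx : ∀ s t a b : ℝ, 0 ≤ a → 0 ≤ b → a + b = 1 →
      g (a * s + b * t) ≤ a * g s + b * g t := by
    intro s t a b ha hb hab
    have hs1 : (1:ℝ) ≤ max s 1 := le_max_right _ _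
    have ht1 : (1:ℝ) ≤ max t 1 := le_max_right _ _
    have hcomb_ge : 1 ≤ a * max s 1 + b * max t 1 := by nlinarith
    have hmax : max (a * s + b * t) 1 ≤ a * max s 1 + b * max t 1 := by
      apply max_le _ hcomb_ge
      have h1 := mul_le_mul_of_nonneg_left (le_max_left s 1) ha
      have h2 := mul_le_mul_of_nonneg_left (le_max_left t 1) hb
      linarith
    have step1 : h (max (a * s + b * t) 1) ≤ h (a * max s 1 + b * max t 1) :=
      hmono (show max (a * s + b * t) 1 ∈ Set.Ici (1:ℝ) from Set.mem_Ici.2 (le_max_right _ _))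
        (show a * max s 1 + b * max t 1 ∈ Set.Ici (1:ℝ) from hcomb_ge) hmax
    have step2 := hc.2 (show max s 1 ∈ Set.Ici (1:ℝ) from hs1)
      (show max t 1 ∈ Set.Ici (1:ℝ) from ht1) ha hb hab
    simp only [smul_eq_mul] at step2
    calc g (a * s + b * t) = h (max (a * s + b * t) 1) := rfl
      _ ≤ h (a * max s 1 + b * max t 1) := step1
      _ ≤ a * h (max s 1) + b * h (max t 1) := step2
      _ = a * g s + b * g t := rfl
  have key : ∀ (F1 F2 : Mat2) (d1 d2 a b : ℝ), 0 < d1 → 0 < d2 → 0 < a → 0 < b →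
      a + b = 1 →
      g (Nn (a • F1 + b • F2) ^ 2 / (a * d1 + b * d2)) ≤
        a * g (Nn F1 ^ 2 / d1) + b * g (Nn F2 ^ 2 / d2) := by
    intro F1 F2 d1 d2 a b hd1 hd2 ha hb hab
    have hd : 0 < a * d1 + b * d2 := by positivity
    have hNm : Nn (a • F1 + b • F2) ≤ a * Nn F1 + b * Nn F2 :=
      Nn_comb F1 F2 a b (le_of_lt ha) (le_of_lt hb)
    have hNm0 : 0 ≤ Nn (a • F1 + b • F2) := Nn_nonneg _
    have hN1 : 0 ≤ Nn F1 := Nn_nonneg _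
    have hN2 : 0 ≤ Nn F2 := Nn_nonneg _
    have step1 : Nn (a • F1 + b • F2) ^ 2 / (a * d1 + b * d2) ≤
        (a * Nn F1 + b * Nn F2) ^ 2 / (a * d1 + b * d2) := by
      rw [div_le_div_iff_of_pos_right hd]
      nlinarith [hNm, hNm0]
    have step2 : (a * Nn F1 + b * Nn F2) ^ 2 / (a * d1 + b * d2) ≤
        a * (Nn F1 ^ 2 / d1) + b * (Nn F2 ^ 2 / d2) := by
      rw [div_le_iff₀ hd]
      have e : a * (Nn F1 ^ 2 / d1) + b * (Nn F2 ^ 2 / d2)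
          = (a * Nn F1 ^ 2 * d2 + b * Nn F2 ^ 2 * d1) / (d1 * d2) := by
        field_simp
      rw [e, div_mul_eq_mul_div, le_div_iff₀ (by positivity : (0:ℝ) < d1 * d2)]
      nlinarith [mul_nonneg (mul_nonneg ha.le hb.le) (sq_nonneg (Nn F1 * d2 - Nn F2 * d1))]
    calc g (Nn (a • F1 + b • F2) ^ 2 / (a * d1 + b * d2))
        ≤ g (a * (Nn F1 ^ 2 / d1) + b * (Nn F2 ^ 2 / d2)) := g_mono (le_trans step1 step2)
      _ ≤ a * g (Nn F1 ^ 2 / d1) + b * g (Nn F2 ^ 2 / d2) := g_cvx _ _ a b ha.le hb.le hab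
  refine ⟨fun p => if 0 < p.2 then ((g (Nn p.1 ^ 2 / p.2) : ℝ) : EReal) else ⊤, ?_, ?_⟩
  · intro x y a b ha hb hab
    by_cases ha0 : a = 0
    · subst ha0
      have hb1 : b = 1 := by linarith
      subst hb1
      simp only [zero_smul, one_smul, zero_add, EReal.coe_zero, EReal.coe_one, zero_mul, one_mul]
      exact le_refl _
    by_cases hb0 : b = 0
    · subst hb0
      have ha1 : a = 1 := by linarith
      subst ha1
      simp only [zero_smul, one_smul, add_zero, EReal.coe_zero, EReal.coe_one, zero_mul,
        one_mul, mul_zero]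
      exact le_refl _
    have ha' : 0 < a := lt_of_le_of_ne ha (Ne.symm ha0)
    have hb' : 0 < b := lt_of_le_of_ne hb (Ne.symm hb0)
    have hPx_ne_bot : (if 0 < x.2 then ((g (Nn x.1 ^ 2 / x.2) : ℝ) : EReal) else ⊤) ≠ ⊥ := by
      split_ifs
      · exact EReal.coe_ne_bot _
      · simp
    have hPy_ne_bot : (if 0 < y.2 then ((g (Nn y.1 ^ 2 / y.2) : ℝ) : EReal) else ⊤) ≠ ⊥ := by
      split_ifs
      · exact EReal.coe_ne_bot _
      · simp
    by_cases hx : 0 < x.2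
    · by_cases hy : 0 < y.2
      · have hsnd : (a • x + b • y).2 = a * x.2 + b * y.2 := rfl
        have hfst : (a • x + b • y).1 = a • x.1 + b • y.1 := rfl
        have hd : 0 < (a • x + b • y).2 := by
          rw [hsnd]; exact add_pos (mul_pos ha' hx) (mul_pos hb' hy)
        beta_reduce
        simp only [hd, hx, hy, if_pos]
        rw [← EReal.coe_mul, ← EReal.coe_mul, ← EReal.coe_add, EReal.coe_le_coe_iff,
          hfst, hsnd]
        exact key x.1 y.1 x.2 y.2 a b hx hy ha' hb' hab
      · beta_reduce
        rw [if_neg hy]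
        have : (b : EReal) * ⊤ = ⊤ := EReal.coe_mul_top_of_pos hb'
        rw [this, EReal.add_top_of_ne_bot (aux_mul_ne_bot a ha' _ hPx_ne_bot)]
        exact le_top
    · beta_reduce
      rw [if_neg hx]
      have : (a : EReal) * ⊤ = ⊤ := EReal.coe_mul_top_of_pos ha'
      rw [this, EReal.top_add_of_ne_bot (aux_mul_ne_bot b hb' _ hPy_ne_bot)]
      exact le_top
  · intro F hF
    obtain ⟨hrep, hge⟩ := rep W hOI hIso F hF
    beta_reduce
    rw [if_pos hF]
    have hmax : max (Nn F ^ 2 / F.det) 1 = Nn F ^ 2 / F.det := max_eq_left hge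
    rw [EReal.coe_eq_coe_iff]
    rw [hrep]
    show h (Nn F ^ 2 / F.det) = g (Nn F ^ 2 / F.det)
    rw [hg]
    simp only [hmax]

end Aux

/-- main equivalence theorem for objective, isotropic, isochoric `W`,
with `h(t) = W(diag(t,1))`. -/
theorem isochoric_main_tfae (W : Mat2 → ℝ)
    (hOI : ObjectiveIsotropic W) (hIso : Isochoric W) :
    List.TFAE
      [Polyconvex W,
       RankOneConvex W,
       ConvexOn ℝ (Set.Ioi (0:ℝ)) (fun t => W (diag2 t 1)),
       ConvexOn ℝ (Set.Ici (1:ℝ)) (fun t => W (diag2 t 1)) ∧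
         MonotoneOn (fun t => W (diag2 t 1)) (Set.Ici (1:ℝ))] := by
  tfae_have 1 → 2 := poly_imp_rank W
  tfae_have 2 → 3 := rank_imp_cvx W
  tfae_have 3 → 4 := cvx_imp_ici W hOI hIso
  tfae_have 4 → 1 := fun hp => ici_imp_poly W hOI hIso hp.1 hp.2
  tfae_finish
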